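/- arXiv:1106.5454 — 4 statements merged into one kernel-verified Lean document; each statement's English description precedes it below -/
import Mathlib

section
/- Let v : ℝ² → ℝ be a C² function belonging to the Sobolev space H²(ℝ²). If Δv(x) ≥ (|x|² − 4)·v(x) for all x with |x| ≥ √17, and v(x) ≤ 0 for all x with |x| = √17, then v(x) ≤ 0 for all x with |x| ≥ √17. -/
open MeasureTheory Real Set

noncomputable section

/-- The Euclidean plane `ℝ²`. -/
abbrev E2 : Type := EuclideanSpace ℝ (Fin 2)

/-- The standard basis vectors of `ℝ²`. -/
noncomputable def std (i : Fin 2) : E2 := EuclideanSpace.single i 1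

/-- The partial derivative of `f` in the `i`-th coordinate direction. -/
noncomputable def D1 (f : E2 → ℝ) (i : Fin 2) (x : E2) : ℝ := fderiv ℝ f x (std i)

/-- Second partial derivative `∂_j ∂_i f`. -/
noncomputable def D2 (f : E2 → ℝ) (i j : Fin 2) (x : E2) : ℝ := fderiv ℝ (D1 f i) x (std j)

/-- The Euclidean Laplacian `Δf = ∑ ∂_{ii} f`. -/
noncomputable def lap (f : E2 → ℝ) (x : E2) : ℝ := ∑ i, D2 f i i x

/-- `g` lies in the Sobolev space `H²` of the region `Ω ⊆ ℝ²`. -/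
def MemH2On (g : E2 → ℝ) (Ω : Set E2) : Prop :=
  MemLp g 2 (volume.restrict Ω) ∧
  MemLp (fun x => ‖fderiv ℝ g x‖) 2 (volume.restrict Ω) ∧
  MemLp (fun x => ‖fderiv ℝ (fderiv ℝ g) x‖) 2 (volume.restrict Ω)

/-! ### Auxiliary infrastructure -/

lemma abs_coord_le (z : E2) (i : Fin 2) : |z i| ≤ ‖z‖ := by
  rw [EuclideanSpace.norm_eq]
  have h1 : |z i| = Real.sqrt (‖z i‖ ^ 2) := by
    rw [Real.sqrt_sq_eq_abs]; simp
  rw [h1]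
  apply Real.sqrt_le_sqrt
  exact Finset.single_le_sum (f := fun j => ‖z j‖^2) (fun j _ => by positivity) (Finset.mem_univ i)

lemma norm_sq_coord (z : E2) : ‖z‖^2 = (z 0)^2 + (z 1)^2 := by
  rw [EuclideanSpace.norm_eq, Real.sq_sqrt (by positivity)]
  simp [Fin.sum_univ_two]

lemma norm_std (i : Fin 2) : ‖std i‖ = 1 := by simp [std]

/-- Coordinate parametrization of the plane. -/
noncomputable def Pm (q : ℝ × ℝ) : E2 := q.1 • std 0 + q.2 • std 1

lemma Pm_apply_fst (q : ℝ × ℝ) : Pm q 0 = q.1 := by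
  simp [Pm, std, EuclideanSpace.single_apply]

lemma Pm_apply_snd (q : ℝ × ℝ) : Pm q 1 = q.2 := by
  simp [Pm, std, EuclideanSpace.single_apply]

lemma Pm_surj (z : E2) : Pm (z 0, z 1) = z := by
  ext i
  fin_cases i <;> simp [Pm, std, EuclideanSpace.single_apply]

lemma Pm_eq : Pm = fun q => (MeasurableEquiv.toLp 2 (Fin 2 → ℝ))
    ((MeasurableEquiv.finTwoArrow).symm q) := by
  funext q
  ext i
  fin_cases i <;>
    simp [Pm, std, EuclideanSpace.single_apply,
      MeasurableEquiv.finTwoArrow]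

lemma Pm_mp : MeasurePreserving Pm (volume : Measure (ℝ × ℝ)) (volume : Measure E2) := by
  rw [Pm_eq]
  exact ((EuclideanSpace.volume_preserving_symm_measurableEquiv_toLp (Fin 2)).symm).comp
    ((volume_preserving_finTwoArrow ℝ).symm)

lemma Pm_cont : Continuous Pm := by
  apply Continuous.add
  · exact continuous_fst.smul continuous_const
  · exact continuous_snd.smul continuous_const

/-! ### Second derivative test -/

lemma secondDeriv_test {g g' : ℝ → ℝ} {c : ℝ}
    (hg' : ∀ t, HasDerivAt g (g' t) t) (hg'' : HasDerivAt g' c 0)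
    (hmax : IsLocalMax g 0) : c ≤ 0 := by
  by_contra hc
  push_neg at hc
  have h0 : g' 0 = 0 := hmax.hasDerivAt_eq_zero (hg' 0)
  have hs : Filter.Tendsto (fun t => g' t / t) (nhdsWithin 0 {(0:ℝ)}ᶜ) (nhds c) := by
    have := hasDerivAt_iff_tendsto_slope.mp hg''
    apply this.congr'
    filter_upwards [] with t
    simp [slope_fun_def_field, h0]
  have hev : ∀ᶠ t in nhdsWithin 0 {(0:ℝ)}ᶜ, g' t / t > c/2 := by
    filter_upwards [hs.eventually (eventually_gt_nhds (by linarith : c/2 < c))] with t ht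
    exact ht
  rw [eventually_nhdsWithin_iff] at hev
  rcases Metric.eventually_nhds_iff.mp (hev.and hmax) with ⟨δ, hδ, hball⟩
  set t0 := δ/2 with ht0
  have ht0pos : 0 < t0 := by positivity
  have hgpos : ∀ t ∈ Set.Ioo (0:ℝ) δ, 0 < g' t := by
    intro t ht
    have h1 : g' t / t > c/2 := by
      have := (hball (by simp [abs_of_pos ht.1]; linarith [ht.2] : dist t 0 < δ)).1
      exact this (by simp [ne_of_gt ht.1])
    have h2 : 0 < g' t / t := lt_trans (by linarith) h1
    have := mul_pos h2 ht.1
    rwa [div_mul_cancel₀] at this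
    exact ne_of_gt ht.1
  have hmono : StrictMonoOn g (Set.Icc 0 t0) := by
    apply strictMonoOn_of_deriv_pos (convex_Icc _ _)
    · exact Continuous.continuousOn (by
        have : Differentiable ℝ g := fun t => (hg' t).differentiableAt
        exact this.continuous)
    · intro t ht
      rw [interior_Icc] at ht
      rw [(hg' t).deriv]
      exact hgpos t ⟨ht.1, lt_of_lt_of_le ht.2 (by linarith)⟩
  have h1 : g 0 < g t0 := hmono (by constructor <;> simp [le_of_lt ht0pos])
      (by constructor <;> simp [le_of_lt ht0pos]) ht0pos
  have h2 : g t0 ≤ g 0 := (hball (by simp [abs_of_pos ht0pos]; linarith : dist t0 0 < δ)).2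
  linarith

lemma D2_nonpos_of_localMax {v : E2 → ℝ} (hreg : ContDiff ℝ 2 v) {x : E2}
    (hmax : IsLocalMax v x) (i : Fin 2) : D2 v i i x ≤ 0 := by
  set L : ℝ → E2 := fun t => x + t • std i with hL
  have hLd : ∀ t, HasDerivAt L (std i) t := by
    intro t
    simpa [hL] using ((hasDerivAt_id t).smul_const (std i)).const_add x
  have hdv : Differentiable ℝ v := hreg.differentiable (by norm_num)
  have hD1cd : ContDiff ℝ 1 (D1 v i) := by
    have h1 : ContDiff ℝ 1 (fderiv ℝ v) := by
      have := (contDiff_succ_iff_fderiv (n := 1)).mp (by norm_num at hreg ⊢; exact hreg)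
      exact this.2.2
    exact ((ContinuousLinearMap.apply ℝ ℝ (std i)).contDiff).comp h1
  have hg' : ∀ t, HasDerivAt (fun s => v (L s)) (D1 v i (L t)) t := by
    intro t
    exact ((hdv (L t)).hasFDerivAt).comp_hasDerivAt t (hLd t)
  have hg'' : HasDerivAt (fun t => D1 v i (L t)) (D2 v i i x) 0 := by
    have h1 : HasFDerivAt (D1 v i) (fderiv ℝ (D1 v i) (L 0)) (L 0) :=
      ((hD1cd.differentiable (by norm_num)) (L 0)).hasFDerivAt
    have := h1.comp_hasDerivAt 0 (hLd 0)
    simpa [D2, hL, Function.comp_def] using this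
  have hmax0 : IsLocalMax (fun s => v (L s)) 0 := by
    have hLc : Continuous L := continuous_const.add (continuous_id.smul continuous_const)
    have hL0 : L 0 = x := by simp [hL]
    have hmax' : IsLocalMax v (L 0) := by rwa [hL0]
    have := hmax'.comp_continuous (hLc.continuousAt (x := (0:ℝ)))
    exact this
  exact secondDeriv_test hg' hg'' hmax0

lemma lap_nonpos_of_localMax {v : E2 → ℝ} (hreg : ContDiff ℝ 2 v) {x : E2}
    (hmax : IsLocalMax v x) : lap v x ≤ 0 :=
  Finset.sum_nonpos fun i _ => D2_nonpos_of_localMax hreg hmax i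

/-! ### 1D bound along a line -/

lemma line_bound {g g' H : ℝ → ℝ} (hg' : ∀ s, HasDerivAt g (g' s) s)
    (hg'c : Continuous g') (hgpos : ∀ s, 0 ≤ g s)
    (hdom : ∀ s, g s + |g' s| ≤ H s) (hH : Integrable H) :
    ∀ y, g y ≤ ∫ s, H s := by
  have hgc : Continuous g := by
    have : Differentiable ℝ g := fun s => (hg' s).differentiableAt
    exact this.continuous
  have hg'abs : ∀ s, 0 ≤ |g' s| := fun s => abs_nonneg _
  have hHpos : ∀ s, 0 ≤ H s := fun s => le_trans (add_nonneg (hgpos s) (abs_nonneg _)) (hdom s)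
  have hgInt : Integrable g := by
    apply hH.mono hgc.aestronglyMeasurable
    filter_upwards [] with s
    rw [Real.norm_eq_abs, Real.norm_eq_abs, abs_of_nonneg (hgpos s), abs_of_nonneg (hHpos s)]
    exact le_trans (le_add_of_nonneg_right (hg'abs s)) (hdom s)
  have hg'Int : Integrable (fun s => |g' s|) := by
    apply hH.mono (hg'c.abs.aestronglyMeasurable)
    filter_upwards [] with s
    rw [Real.norm_eq_abs, Real.norm_eq_abs, abs_abs, abs_of_nonneg (hHpos s)]
    exact le_trans (le_add_of_nonneg_left (hgpos s)) (hdom s)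
  set A := ∫ s, g s with hA
  have hex : ∃ s₀, g s₀ ≤ A := by
    by_contra hno
    push_neg at hno
    obtain ⟨sm, hsm, hmin⟩ := (isCompact_Icc (a := (0:ℝ)) (b := 1)).exists_isMinOn
      (Set.nonempty_Icc.mpr zero_le_one) (hgc.continuousOn)
    have h1 : ∫ s in Set.Icc (0:ℝ) 1, g s ≤ A := by
      apply setIntegral_le_integral hgInt
      filter_upwards [] with s using hgpos s
    have h2 : g sm ≤ ∫ s in Set.Icc (0:ℝ) 1, g s := by
      have h3 : (g sm) * (volume (Set.Icc (0:ℝ) 1)).toReal ≤ ∫ s in Set.Icc (0:ℝ) 1, g s := by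
        rw [← measureReal_def]
        apply setIntegral_ge_of_const_le_real measurableSet_Icc (by simp)
        · exact fun x hx => hmin hx
        · exact hgInt.integrableOn
      simpa using h3
    exact absurd (lt_of_le_of_lt (le_trans h2 h1) (hno sm)) (lt_irrefl _)
  obtain ⟨s₀, hs₀⟩ := hex
  intro y
  have hftc : ∫ t in s₀..y, g' t = g y - g s₀ := by
    apply intervalIntegral.integral_eq_sub_of_hasDerivAt
    · exact fun t _ => hg' t
    · exact hg'c.intervalIntegrable _ _
  have habs : |∫ t in s₀..y, g' t| ≤ ∫ s, |g' s| := by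
    calc |∫ t in s₀..y, g' t| ≤ ∫ t in Set.uIoc s₀ y, |g' t| := by
          simpa [Real.norm_eq_abs] using
            intervalIntegral.norm_integral_le_integral_norm_uIoc (f := g') (a := s₀) (b := y)
             (μ := volume)
      _ ≤ ∫ s, |g' s| := by
          apply setIntegral_le_integral hg'Int
          filter_upwards [] with s using abs_nonneg _
  have hy : g y ≤ g s₀ + |∫ t in s₀..y, g' t| := by
    nlinarith [abs_nonneg (∫ t in s₀..y, g' t), le_abs_self (∫ t in s₀..y, g' t), hftc]
  have hadd : A + (∫ s, |g' s|) = ∫ s, (g s + |g' s|) := (integral_add hgInt hg'Int).symm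
  have hmono : (∫ s, (g s + |g' s|)) ≤ ∫ s, H s := integral_mono (hgInt.add hg'Int) hH hdom
  linarith

/-! ### Bound for `v²` along a line -/

lemma cont_fderiv {v : E2 → ℝ} (hreg : ContDiff ℝ 2 v) : Continuous (fderiv ℝ v) := by
  have := (contDiff_succ_iff_fderiv (n := 1)).mp (by norm_num at hreg ⊢; exact hreg)
  exact this.2.2.continuous

lemma sq_line_bound {v : E2 → ℝ} (hreg : ContDiff ℝ 2 v) {L : ℝ → E2} {d : E2}
    (hd : ‖d‖ ≤ 1) (hL : ∀ s, HasDerivAt L d s)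
    (hInt : Integrable (fun s => 2 * (v (L s))^2 + ‖fderiv ℝ v (L s)‖^2)) :
    ∀ y, (v (L y))^2 ≤ ∫ s, (2 * (v (L s))^2 + ‖fderiv ℝ v (L s)‖^2) := by
  have hdv : Differentiable ℝ v := hreg.differentiable (by norm_num)
  have hvc : Continuous v := hdv.continuous
  have hLc : Continuous L := by
    have : Differentiable ℝ L := fun s => (hL s).differentiableAt
    exact this.continuous
  have hfdc : Continuous (fderiv ℝ v) := cont_fderiv hreg
  set g' : ℝ → ℝ := fun s => 2 * v (L s) * (fderiv ℝ v (L s) d) with hg'def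
  have hg' : ∀ s, HasDerivAt (fun s => (v (L s))^2) (g' s) s := by
    intro s
    have h1 : HasDerivAt (fun s => v (L s)) (fderiv ℝ v (L s) d) s :=
      ((hdv (L s)).hasFDerivAt).comp_hasDerivAt s (hL s)
    have := h1.fun_pow 2
    simpa [hg'def] using this
  have hg'c : Continuous g' := by
    apply Continuous.mul
    · exact (continuous_const.mul (hvc.comp hLc))
    · exact ((ContinuousLinearMap.apply ℝ ℝ d).continuous).comp (hfdc.comp hLc)
  apply line_bound hg' hg'c (fun s => sq_nonneg _) _ hInt
  intro s
  have hle : |fderiv ℝ v (L s) d| ≤ ‖fderiv ℝ v (L s)‖ := by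
    have h1 := (fderiv ℝ v (L s)).le_opNorm d
    rw [Real.norm_eq_abs] at h1
    calc |fderiv ℝ v (L s) d| ≤ ‖fderiv ℝ v (L s)‖ * ‖d‖ := h1
      _ ≤ ‖fderiv ℝ v (L s)‖ * 1 := by
          apply mul_le_mul_of_nonneg_left hd (norm_nonneg _)
      _ = _ := mul_one _
  have habs : |g' s| = 2 * |v (L s)| * |fderiv ℝ v (L s) d| := by
    simp [hg'def, abs_mul]; try ring
  nlinarith [sq_nonneg (|v (L s)| - |fderiv ℝ v (L s) d|), abs_nonneg (v (L s)),
    abs_nonneg (fderiv ℝ v (L s) d), sq_abs (v (L s)), sq_abs (fderiv ℝ v (L s) d),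
    norm_nonneg (fderiv ℝ v (L s)), sq_nonneg (fderiv ℝ v (L s) d)]

/-! ### Choice of a good large square -/

lemma exists_good_R {v : E2 → ℝ} (hreg : ContDiff ℝ 2 v)
    (hInt : Integrable (fun x : E2 => 2 * (v x)^2 + ‖fderiv ℝ v x‖^2))
    {ε : ℝ} (hε : 0 < ε) (R₀ : ℝ) :
    ∃ R, R₀ < R ∧ ∀ z : E2, (|z 0| = R ∨ |z 1| = R) → (v z)^2 ≤ ε := by
  set h : E2 → ℝ := fun x => 2 * (v x)^2 + ‖fderiv ℝ v x‖^2 with hh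
  have hhc : Continuous h := by
    apply Continuous.add
    · exact continuous_const.mul ((hreg.differentiable (by norm_num)).continuous.pow 2)
    · exact ((cont_fderiv hreg).norm).pow 2
  have hhpos : ∀ x, 0 ≤ h x := fun x => by positivity
  -- the four integrable functions on ℝ × ℝ
  set f₁ : ℝ × ℝ → ℝ := fun q => h (Pm q) with hf₁def
  have hf₁c : Continuous f₁ := hhc.comp Pm_cont
  have hf₁ : Integrable f₁ (volume.prod volume) := by
    rw [← Measure.volume_eq_prod]
    exact (Pm_mp.integrable_comp hhc.aestronglyMeasurable).mpr hInt
  have hnegfst : MeasurePreserving (Prod.map (Neg.neg : ℝ → ℝ) (id : ℝ → ℝ))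
      (volume.prod volume) (volume.prod volume) :=
    (Measure.measurePreserving_neg volume).prod (MeasurePreserving.id volume)
  set f₃ : ℝ × ℝ → ℝ := f₁ ∘ (Prod.map (Neg.neg : ℝ → ℝ) (id : ℝ → ℝ)) with hf₃def
  have hf₃ : Integrable f₃ (volume.prod volume) :=
    (hnegfst.integrable_comp hf₁.aestronglyMeasurable).mpr hf₁
  set f₂ : ℝ × ℝ → ℝ := f₁ ∘ Prod.swap with hf₂def
  have hf₂ : Integrable f₂ (volume.prod volume) := hf₁.swap
  have hf₂c : Continuous f₂ := hf₁c.comp continuous_swap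
  set f₄ : ℝ × ℝ → ℝ := f₂ ∘ (Prod.map (Neg.neg : ℝ → ℝ) (id : ℝ → ℝ)) with hf₄def
  have hf₄ : Integrable f₄ (volume.prod volume) :=
    (hnegfst.integrable_comp hf₂c.aestronglyMeasurable).mpr hf₂
  -- the four marginal integrals
  set F₁ : ℝ → ℝ := fun t => ∫ s, f₁ (t, s) with hF₁def
  set F₂ : ℝ → ℝ := fun t => ∫ s, f₂ (t, s) with hF₂def
  set F₃ : ℝ → ℝ := fun t => ∫ s, f₃ (t, s) with hF₃def
  set F₄ : ℝ → ℝ := fun t => ∫ s, f₄ (t, s) with hF₄def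
  set G : ℝ → ℝ := fun t => F₁ t + F₂ t + F₃ t + F₄ t with hGdef
  have hG : Integrable G (volume : Measure ℝ) :=
    ((hf₁.integral_prod_left.add hf₂.integral_prod_left).add hf₃.integral_prod_left).add
      hf₄.integral_prod_left
  -- Markov: the set where G ≥ ε has finite measure
  have hMarkov : volume {t : ℝ | ε ≤ G t} < ⊤ := hG.measure_ge_lt_top hε
  -- good slices: a.e. t, all four slices are integrable
  have hae : ∀ᵐ t : ℝ, Integrable (fun s => f₁ (t, s)) volume ∧
      Integrable (fun s => f₂ (t, s)) volume ∧
      Integrable (fun s => f₃ (t, s)) volume ∧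
      Integrable (fun s => f₄ (t, s)) volume := by
    filter_upwards [hf₁.prod_right_ae, hf₂.prod_right_ae, hf₃.prod_right_ae,
      hf₄.prod_right_ae] with t h1 h2 h3 h4
    exact ⟨h1, h2, h3, h4⟩
  -- choose R
  set T : Set ℝ := (Set.Ioi (max R₀ 0)) \ {t : ℝ | ε ≤ G t} with hTdef
  have hTvol : volume T = ⊤ := by
    by_contra hne
    have hsub : Set.Ioi (max R₀ 0) ⊆ T ∪ {t : ℝ | ε ≤ G t} := by
      intro t ht
      by_cases hc : ε ≤ G t
      · exact Or.inr hc
      · exact Or.inl ⟨ht, hc⟩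
    have h1 : volume (Set.Ioi (max R₀ 0)) ≤ volume T + volume {t : ℝ | ε ≤ G t} :=
      le_trans (measure_mono hsub) (measure_union_le _ _)
    rw [Real.volume_Ioi] at h1
    have h2 : volume T + volume {t : ℝ | ε ≤ G t} < ⊤ :=
      ENNReal.add_lt_top.mpr ⟨lt_top_iff_ne_top.mpr hne, hMarkov⟩
    exact absurd (lt_of_le_of_lt h1 h2) (lt_irrefl _)
  -- pick a good R
  set Bad : Set ℝ := {t : ℝ | ¬ (Integrable (fun s => f₁ (t, s)) volume ∧
      Integrable (fun s => f₂ (t, s)) volume ∧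
      Integrable (fun s => f₃ (t, s)) volume ∧
      Integrable (fun s => f₄ (t, s)) volume)} with hBaddef
  have hBad : volume Bad = 0 := by rw [hBaddef]; exact ae_iff.mp hae
  have hTne : ¬ (T ⊆ Bad) := by
    intro hsub
    have := measure_mono (μ := (volume : Measure ℝ)) hsub
    rw [hTvol, hBad] at this
    simp at this
  rw [Set.not_subset] at hTne
  obtain ⟨R, hRT, hRBad⟩ := hTne
  rw [hBaddef, Set.mem_setOf_eq, not_not] at hRBad
  obtain ⟨hsl₁, hsl₂, hsl₃, hsl₄⟩ := hRBad
  have hRmax : max R₀ 0 < R := hRT.1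
  have hRpos : 0 < R := lt_of_le_of_lt (le_max_right _ _) hRmax
  have hGR : G R < ε := by
    have := hRT.2
    rw [Set.mem_setOf_eq] at this
    linarith [not_le.mp this]
  have hF₁pos : 0 ≤ F₁ R := integral_nonneg (fun s => hhpos _)
  have hF₂pos : 0 ≤ F₂ R := integral_nonneg (fun s => hhpos _)
  have hF₃pos : 0 ≤ F₃ R := integral_nonneg (fun s => hhpos _)
  have hF₄pos : 0 ≤ F₄ R := integral_nonneg (fun s => hhpos _)
  refine ⟨R, lt_of_le_of_lt (le_max_left _ _) hRmax, ?_⟩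
  intro z hz
  have hcase : z 0 = R ∨ z 0 = -R ∨ z 1 = R ∨ z 1 = -R := by
    rcases hz with h1 | h1
    · rcases abs_eq (le_of_lt hRpos) |>.mp h1 with h2 | h2
      · exact Or.inl h2
      · exact Or.inr (Or.inl h2)
    · rcases abs_eq (le_of_lt hRpos) |>.mp h1 with h2 | h2
      · exact Or.inr (Or.inr (Or.inl h2))
      · exact Or.inr (Or.inr (Or.inr h2))
  rcases hcase with hc | hc | hc | hc
  · -- z 0 = R, vertical line x₁ = R
    set L : ℝ → E2 := fun s => Pm (R, s) with hLdef
    have hLd : ∀ s, HasDerivAt L (std 1) s := by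
      intro s
      simpa [hLdef, Pm] using ((hasDerivAt_id s).smul_const (std 1)).const_add (R • std 0)
    have hslice : Integrable (fun s => 2 * (v (L s))^2 + ‖fderiv ℝ v (L s)‖^2) := hsl₁
    have hb := sq_line_bound hreg (le_of_eq (norm_std 1)) hLd hslice (z 1)
    have hLz : L (z 1) = z := by rw [hLdef]; simp only; rw [← hc]; exact Pm_surj z
    rw [hLz] at hb
    calc (v z)^2 ≤ F₁ R := hb
      _ ≤ G R := by simp only [hGdef]; linarith
      _ ≤ ε := le_of_lt hGR
  · -- z 0 = -R
    set L : ℝ → E2 := fun s => Pm (-R, s) with hLdef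
    have hLd : ∀ s, HasDerivAt L (std 1) s := by
      intro s
      simpa [hLdef, Pm] using ((hasDerivAt_id s).smul_const (std 1)).const_add ((-R) • std 0)
    have hslice : Integrable (fun s => 2 * (v (L s))^2 + ‖fderiv ℝ v (L s)‖^2) := hsl₃
    have hb := sq_line_bound hreg (le_of_eq (norm_std 1)) hLd hslice (z 1)
    have hLz : L (z 1) = z := by rw [hLdef]; simp only; rw [← hc]; exact Pm_surj z
    rw [hLz] at hb
    calc (v z)^2 ≤ F₃ R := hb
      _ ≤ G R := by simp only [hGdef]; linarith
      _ ≤ ε := le_of_lt hGR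
  · -- z 1 = R
    set L : ℝ → E2 := fun s => Pm (s, R) with hLdef
    have hLd : ∀ s, HasDerivAt L (std 0) s := by
      intro s
      simpa [hLdef, Pm] using ((hasDerivAt_id s).smul_const (std 0)).add_const (R • std 1)
    have hslice : Integrable (fun s => 2 * (v (L s))^2 + ‖fderiv ℝ v (L s)‖^2) := hsl₂
    have hb := sq_line_bound hreg (le_of_eq (norm_std 0)) hLd hslice (z 0)
    have hLz : L (z 0) = z := by rw [hLdef]; simp only; rw [← hc]; exact Pm_surj z
    rw [hLz] at hb
    calc (v z)^2 ≤ F₂ R := hb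
      _ ≤ G R := by simp only [hGdef]; linarith
      _ ≤ ε := le_of_lt hGR
  · -- z 1 = -R
    set L : ℝ → E2 := fun s => Pm (s, -R) with hLdef
    have hLd : ∀ s, HasDerivAt L (std 0) s := by
      intro s
      simpa [hLdef, Pm] using ((hasDerivAt_id s).smul_const (std 0)).add_const ((-R) • std 1)
    have hslice : Integrable (fun s => 2 * (v (L s))^2 + ‖fderiv ℝ v (L s)‖^2) := hsl₄
    have hb := sq_line_bound hreg (le_of_eq (norm_std 0)) hLd hslice (z 0)
    have hLz : L (z 0) = z := by rw [hLdef]; simp only; rw [← hc]; exact Pm_surj z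
    rw [hLz] at hb
    calc (v z)^2 ≤ F₄ R := hb
      _ ≤ G R := by simp only [hGdef]; linarith
      _ ≤ ε := le_of_lt hGR

/-! ### Main theorem -/

/-- Maximum principle for the quantum harmonic oscillator on the exterior of
the disk of radius `√17`: if `v ∈ C² ∩ H²(ℝ²)`, `Δv ≥ (|x|² − 4)v` for `|x| ≥ √17` and
`v ≤ 0` on `{|x| = √17}`, then `v ≤ 0` on `{|x| ≥ √17}`. -/
theorem stmt3 (v : E2 → ℝ) (hreg : ContDiff ℝ 2 v)
    (hH2 : MemH2On v Set.univ)
    (hsub : ∀ x : E2, Real.sqrt 17 ≤ ‖x‖ → (‖x‖^2 - 4) * v x ≤ lap v x)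
    (hbd : ∀ x : E2, ‖x‖ = Real.sqrt 17 → v x ≤ 0) :
    ∀ x : E2, Real.sqrt 17 ≤ ‖x‖ → v x ≤ 0 := by
  have hvc : Continuous v := (hreg.differentiable (by norm_num)).continuous
  have hInt : Integrable (fun x : E2 => 2 * (v x)^2 + ‖fderiv ℝ v x‖^2) volume := by
    obtain ⟨h1, h2, -⟩ := hH2
    rw [Measure.restrict_univ] at h1 h2
    have i1 : Integrable (fun x => (v x)^2) volume := h1.integrable_sq
    have i2 : Integrable (fun x => ‖fderiv ℝ v x‖^2) volume := by simpa using h2.integrable_sq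
    exact (i1.const_mul 2).add i2
  have hcoord : ∀ i : Fin 2, Continuous (fun z : E2 => z i) := by
    intro i
    exact (EuclideanSpace.proj (𝕜 := ℝ) (i : Fin 2)).continuous
  intro x₀ hx₀
  have key : ∀ ε : ℝ, 0 < ε → v x₀ ≤ ε := by
    intro ε hε
    obtain ⟨R, hR, hbound⟩ := exists_good_R hreg hInt (show (0:ℝ) < ε^2 by positivity)
      (max ‖x₀‖ (Real.sqrt 17))
    have hRx₀ : ‖x₀‖ < R := lt_of_le_of_lt (le_max_left _ _) hR
    have hR17 : Real.sqrt 17 < R := lt_of_le_of_lt (le_max_right _ _) hR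
    have hRpos : 0 < R := lt_of_le_of_lt (Real.sqrt_nonneg 17) hR17
    set C : Set E2 := {z | Real.sqrt 17 ≤ ‖z‖ ∧ |z 0| ≤ R ∧ |z 1| ≤ R} with hCdef
    have hCeq : C = {z : E2 | Real.sqrt 17 ≤ ‖z‖} ∩
        ({z | |z 0| ≤ R} ∩ {z | |z 1| ≤ R}) := by
      ext z; simp [hCdef, and_assoc]
    have hCclosed : IsClosed C := by
      rw [hCeq]
      refine IsClosed.inter (isClosed_le continuous_const continuous_norm)
        (IsClosed.inter ?_ ?_)
      · exact isClosed_le ((hcoord 0).abs) continuous_const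
      · exact isClosed_le ((hcoord 1).abs) continuous_const
    have hCbdd : Bornology.IsBounded C := by
      apply (Metric.isBounded_closedBall (x := (0 : E2)) (r := 2*R)).subset
      intro z hz
      rw [Metric.mem_closedBall, dist_zero_right]
      have h1 : ‖z‖^2 ≤ (2*R)^2 := by
        rw [norm_sq_coord]
        have := hz.2.1; have := hz.2.2
        nlinarith [abs_nonneg (z 0), abs_nonneg (z 1), sq_abs (z 0), sq_abs (z 1)]
      nlinarith [norm_nonneg z]
    have hCcompact : IsCompact C := Metric.isCompact_of_isClosed_isBounded hCclosed hCbdd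
    have hx₀C : x₀ ∈ C := ⟨hx₀, le_trans (abs_coord_le x₀ 0) (le_of_lt hRx₀),
      le_trans (abs_coord_le x₀ 1) (le_of_lt hRx₀)⟩
    obtain ⟨z, hzC, hzmax⟩ := hCcompact.exists_isMaxOn ⟨x₀, hx₀C⟩ hvc.continuousOn
    have hvx₀ : v x₀ ≤ v z := hzmax hx₀C
    obtain ⟨hz17, hz0, hz1⟩ := hzC
    by_cases hb1 : |z 0| = R ∨ |z 1| = R
    · have h1 := hbound z hb1
      have h2 : v z ≤ ε := by nlinarith
      linarith
    · push_neg at hb1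
      have hz0' : |z 0| < R := lt_of_le_of_ne hz0 hb1.1
      have hz1' : |z 1| < R := lt_of_le_of_ne hz1 hb1.2
      by_cases hb2 : ‖z‖ = Real.sqrt 17
      · linarith [hbd z hb2]
      · have hz17' : Real.sqrt 17 < ‖z‖ := lt_of_le_of_ne hz17 (Ne.symm hb2)
        have hU : {w : E2 | Real.sqrt 17 < ‖w‖ ∧ |w 0| < R ∧ |w 1| < R} ∈ nhds z := by
          apply IsOpen.mem_nhds
          · have e : {w : E2 | Real.sqrt 17 < ‖w‖ ∧ |w 0| < R ∧ |w 1| < R} =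
                {w : E2 | Real.sqrt 17 < ‖w‖} ∩ ({w | |w 0| < R} ∩ {w | |w 1| < R}) := by
              ext w; simp [and_assoc]
            rw [e]
            exact (isOpen_lt continuous_const continuous_norm).inter
              ((isOpen_lt (hcoord 0).abs continuous_const).inter
               (isOpen_lt (hcoord 1).abs continuous_const))
          · exact ⟨hz17', hz0', hz1'⟩
        have hCn : C ∈ nhds z := by
          apply Filter.mem_of_superset hU
          intro w hw
          exact ⟨le_of_lt hw.1, le_of_lt hw.2.1, le_of_lt hw.2.2⟩
        have hloc : IsLocalMax v z := hzmax.isLocalMax hCn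
        have hlap := lap_nonpos_of_localMax hreg hloc
        have hsub' := hsub z (le_of_lt hz17')
        have h17 : 17 ≤ ‖z‖^2 := by
          have h2 : Real.sqrt 17 ^ 2 ≤ ‖z‖^2 := by
            apply pow_le_pow_left₀ (Real.sqrt_nonneg 17) (le_of_lt hz17')
          rwa [Real.sq_sqrt (by norm_num : (17:ℝ) ≥ 0)] at h2
        nlinarith
  by_contra hpos
  push_neg at hpos
  linarith [key (v x₀ / 2) (by linarith)]

end
end

section
/- Let R > 0, M ≥ 0, and let u : [R,∞) → ℝ be C¹. Define w(r) := −r·u'(r) + u(r) and suppose |w(r)| ≤ M/r for all r ≥ R. Then the limit c := lim_{r→∞} u(r)/r exists, it equals u(R)/R − ∫_R^∞ w(s)/s² ds, and for every r ≥ R one has u(r) = c·r + r·∫_r^∞ w(s)/s² ds; in particular |u(r) − c·r| ≤ M/(2r) for all r ≥ R. -/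
open MeasureTheory Real Set

noncomputable section

/-- Radial integration step in the Liouville decomposition: if `u` is `C¹` on
`[R,∞)` and `w(r) := −r·u'(r) + u(r)` satisfies `|w(r)| ≤ M/r`, then `c := lim_{r→∞} u(r)/r`
exists, equals `u(R)/R − ∫_R^∞ w(s)/s² ds`, and `u(r) = c·r + r·∫_r^∞ w(s)/s² ds`; in
particular `|u(r) − c·r| ≤ M/(2r)` for all `r ≥ R`. -/
theorem stmt10 (R M : ℝ) (hR : 0 < R) (hM : 0 ≤ M)
    (u du : ℝ → ℝ)
    (hder : ∀ r ∈ Set.Ici R, HasDerivWithinAt u (du r) (Set.Ici R) r)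
    (hcont : ContinuousOn du (Set.Ici R))
    (hw : ∀ r, R ≤ r → |(-r * du r + u r)| ≤ M / r) :
    Filter.Tendsto (fun r => u r / r) Filter.atTop
      (nhds (u R / R - ∫ s in Set.Ioi R, (-s * du s + u s) / s ^ 2)) ∧
    (∀ r, R ≤ r →
      u r = (u R / R - ∫ s in Set.Ioi R, (-s * du s + u s) / s ^ 2) * r
        + r * ∫ s in Set.Ioi r, (-s * du s + u s) / s ^ 2) ∧
    (∀ r, R ≤ r →
      |u r - (u R / R - ∫ s in Set.Ioi R, (-s * du s + u s) / s ^ 2) * r| ≤ M / (2 * r)) := by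
  set f : ℝ → ℝ := fun s => (-s * du s + u s) / s ^ 2 with hf_def
  have hucont : ContinuousOn u (Set.Ici R) := fun x hx => (hder x hx).continuousWithinAt
  have hwcont : ContinuousOn (fun s => -s * du s + u s) (Set.Ici R) :=
    ((continuousOn_id.neg).mul hcont).add hucont
  have hfcont : ContinuousOn f (Set.Ici R) := by
    apply hwcont.div (continuousOn_pow 2)
    intro x hx
    have : (0:ℝ) < x := lt_of_lt_of_le hR hx
    positivity
  -- pointwise bound on Ioi r for r ≥ R
  have hbnd : ∀ r, R ≤ r → ∀ s ∈ Set.Ioi r, |f s| ≤ M * s ^ (-3 : ℝ) := by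
    intro r hr s hs
    have hs0 : (0:ℝ) < s := lt_of_lt_of_le hR (hr.trans (le_of_lt hs))
    have h1 : |(-s * du s + u s)| ≤ M / s := hw s (hr.trans (le_of_lt hs))
    have h2 : s ^ (-3 : ℝ) = (s ^ 3)⁻¹ := by
      rw [show (-3 : ℝ) = -(3:ℕ) by norm_num, Real.rpow_neg hs0.le, Real.rpow_natCast]
    rw [hf_def]
    simp only [abs_div, abs_pow, abs_of_pos hs0, h2]
    rw [div_le_iff₀ (by positivity)]
    calc |(-s * du s + u s)| ≤ M / s := h1
      _ = M * (s ^ 3)⁻¹ * s ^ 2 := by field_simp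
    done
  have hgint : ∀ r, 0 < r → IntegrableOn (fun s => M * s ^ (-3 : ℝ)) (Set.Ioi r) :=
    fun r hr => (integrableOn_Ioi_rpow_of_lt (by norm_num) hr).const_mul M
  have hint : IntegrableOn f (Set.Ioi R) := by
    refine Integrable.mono' (hgint R hR) ?_ ?_
    · exact (hfcont.mono Set.Ioi_subset_Ici_self).aestronglyMeasurable measurableSet_Ioi
    · filter_upwards [ae_restrict_mem measurableSet_Ioi] with s hs
      simpa [Real.norm_eq_abs] using hbnd R le_rfl s hs
  -- FTC
  have key : ∀ r, R ≤ r → u r / r = u R / R - ∫ s in R..r, f s := by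
    intro r hr
    have h1 : (∫ s in R..r, (fun s => -f s) s) = u r / r - u R / R := by
      apply intervalIntegral.integral_eq_sub_of_hasDeriv_right_of_le hr
      · apply ContinuousOn.div (hucont.mono (fun x hx => hx.1))
          (continuousOn_id.mono (fun x hx => hx.1))
        intro x hx
        exact ne_of_gt (lt_of_lt_of_le hR hx.1)
      · intro x hx
        have hx1 : R < x := hx.1
        have hx0 : (0:ℝ) < x := hR.trans hx1
        have hd : HasDerivWithinAt (fun s => u s / s)
            ((du x * x - u x * 1) / x ^ 2) (Set.Ici R) x :=
          (hder x hx1.le).div (hasDerivWithinAt_id x _) (ne_of_gt hx0)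
        have hsub : Set.Ioi x ⊆ Set.Ici R := fun s hs => (hx1.le.trans (le_of_lt hs))
        have := hd.mono hsub
        convert this using 1
        rw [hf_def]
        field_simp
        ring
      · apply ContinuousOn.intervalIntegrable
        rw [Set.uIcc_of_le hr]
        exact (hfcont.neg).mono (Set.Icc_subset_Ici_self)
    simp only [intervalIntegral.integral_neg] at h1
    linarith
  have htend : Filter.Tendsto (fun r => ∫ s in R..r, f s) Filter.atTop
      (nhds (∫ s in Set.Ioi R, f s)) :=
    intervalIntegral_tendsto_integral_Ioi R hint Filter.tendsto_id
  have hsplit : ∀ r, R ≤ r →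
      (∫ s in Set.Ioi R, f s) = (∫ s in R..r, f s) + ∫ s in Set.Ioi r, f s := by
    intro r hr
    rw [intervalIntegral.integral_of_le hr, ← Set.Ioc_union_Ioi_eq_Ioi hr,
      setIntegral_union (Set.Ioc_disjoint_Ioi le_rfl) measurableSet_Ioi
        (hint.mono_set Set.Ioc_subset_Ioi_self) (hint.mono_set (Set.Ioi_subset_Ioi hr))]
  have part2 : ∀ r, R ≤ r →
      u r = (u R / R - ∫ s in Set.Ioi R, f s) * r + r * ∫ s in Set.Ioi r, f s := by
    intro r hr
    have hr0 : (0:ℝ) < r := lt_of_lt_of_le hR hr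
    have h1 := key r hr
    have h2 := hsplit r hr
    have h3 : u r / r = (u R / R - ∫ s in Set.Ioi R, f s) + ∫ s in Set.Ioi r, f s := by
      rw [h1, h2]; ring
    rw [div_eq_iff hr0.ne'] at h3
    rw [h3]; ring
  refine ⟨?_, part2, ?_⟩
  · apply Filter.Tendsto.congr' ?_ (tendsto_const_nhds.sub htend)
    filter_upwards [Filter.eventually_ge_atTop R] with r hr
    exact (key r hr).symm
  · intro r hr
    have hr0 : (0:ℝ) < r := lt_of_lt_of_le hR hr
    have habs : |∫ s in Set.Ioi r, f s| ≤ M / (2 * r ^ 2) := by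
      have h1 : |∫ s in Set.Ioi r, f s| ≤ ∫ s in Set.Ioi r, |f s| := by
        simpa [Real.norm_eq_abs] using
          norm_integral_le_integral_norm (μ := volume.restrict (Set.Ioi r)) f
      have h2 : (∫ s in Set.Ioi r, |f s|) ≤ ∫ s in Set.Ioi r, M * s ^ (-3 : ℝ) := by
        apply setIntegral_mono_on ((hint.mono_set (Set.Ioi_subset_Ioi hr)).abs)
          (hgint r hr0) measurableSet_Ioi
        exact hbnd r hr
      have h3 : (∫ s in Set.Ioi r, M * s ^ (-3 : ℝ)) = M / (2 * r ^ 2) := by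
        rw [MeasureTheory.integral_const_mul, integral_Ioi_rpow_of_lt (by norm_num) hr0]
        rw [show (-3:ℝ)+1 = -(2:ℕ) by norm_num, Real.rpow_neg hr0.le, Real.rpow_natCast]
        field_simp
        norm_num
      linarith
    rw [part2 r hr]
    have : |(u R / R - ∫ s in Set.Ioi R, f s) * r + r * (∫ s in Set.Ioi r, f s)
        - (u R / R - ∫ s in Set.Ioi R, f s) * r| = r * |∫ s in Set.Ioi r, f s| := by
      rw [add_sub_cancel_left, abs_mul, abs_of_pos hr0]
    rw [this]
    calc r * |∫ s in Set.Ioi r, f s| ≤ r * (M / (2 * r ^ 2)) :=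
          mul_le_mul_of_nonneg_left habs hr0.le
      _ = M / (2 * r) := by field_simp

end
end

section
/- Let R ∈ {√2, 2} and let B̄_R ⊂ ℝ² be the closed disk of radius R about the origin. If u : B̄_R → ℝ is continuous on B̄_R, C² on the open disk, satisfies Δu(x) − (|x|²/16)·u(x) + u(x) = 0 for all |x| < R, and u = 0 on the boundary circle {|x| = R}, then u ≡ 0. That is, the operator Δ − |x|²/16 + 1 (the stability operator of a flat plane through the origin as a minimal surface in the Gaussian metric e^{−|x|²/4}δ, up to the conformal factor) has trivial Dirichlet kernel on the disks of radius √2 and 2. -/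
open MeasureTheory Real Set Metric Filter Topology

noncomputable section

/-! ### Auxiliary material for the proof -/

namespace Stmt16Aux

/-- Parameter `a = 1/20` of the supersolution. -/
def sa : ℝ := 1/20
/-- Parameter `b = √61/10` of the supersolution. -/
def sb : ℝ := Real.sqrt 61 / 10

lemma sa_val : sa = 1/20 := rfl

lemma sb_pos : 0 < sb := by
  unfold sb
  have : 0 < Real.sqrt 61 := Real.sqrt_pos.mpr (by norm_num)
  linarith

lemma sb_sq : sb^2 = 61/100 := by
  unfold sb
  rw [div_pow, Real.sq_sqrt (by norm_num : (0:ℝ) ≤ 61)]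
  norm_num

lemma sb_small : 2 * sb < Real.pi / 2 := by
  have h1 : Real.sqrt 61 < 7.811 := by
    rw [Real.sqrt_lt' (by norm_num)]; norm_num
  have h2 := Real.pi_gt_d6
  unfold sb
  linarith

lemma cos_pos_of (s : ℝ) (hs : |s| ≤ 2) : 0 < Real.cos (sb * s) := by
  apply Real.cos_pos_of_mem_Ioo
  have h1 : |sb * s| < Real.pi / 2 := by
    rw [abs_mul, abs_of_pos sb_pos]
    calc sb * |s| ≤ sb * 2 := by nlinarith [sb_pos]
    _ < Real.pi / 2 := by linarith [sb_small]
  have h2 := abs_lt.mp h1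
  exact ⟨h2.1, h2.2⟩

lemma sin_sign_aux (s : ℝ) (h0 : 0 ≤ s) (hs : |s| ≤ 2) : 0 ≤ s * Real.sin (sb * s) := by
  apply mul_nonneg h0
  apply Real.sin_nonneg_of_nonneg_of_le_pi (mul_nonneg sb_pos.le h0)
  have hs2 : s ≤ 2 := le_trans (le_abs_self s) hs
  have := sb_small
  have := Real.pi_pos
  nlinarith [sb_pos]

lemma sin_sign (s : ℝ) (hs : |s| ≤ 2) : 0 ≤ s * Real.sin (sb * s) := by
  rcases le_or_gt 0 s with h | h
  · exact sin_sign_aux s h hs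
  · have h1 : 0 ≤ (-s) * Real.sin (sb * (-s)) := by
      apply sin_sign_aux (-s) (by linarith)
      rwa [abs_neg]
    rw [mul_neg, Real.sin_neg] at h1
    nlinarith

/-- The one-dimensional profile of the supersolution. -/
def f0 (t : ℝ) : ℝ := Real.cos (sb*t) * Real.exp (sa*t^2)
/-- Its derivative. -/
def f1 (t : ℝ) : ℝ :=
  (2*sa*t*Real.cos (sb*t) - sb*Real.sin (sb*t)) * Real.exp (sa*t^2)
/-- Its second derivative. -/
def f2 (t : ℝ) : ℝ :=
  ((4*sa^2*t^2 - sb^2 + 2*sa)*Real.cos (sb*t) - 4*sa*sb*t*Real.sin (sb*t)) * Real.exp (sa*t^2)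

lemma hcos (t : ℝ) : HasDerivAt (fun t => Real.cos (sb*t)) (-(sb*Real.sin (sb*t))) t := by
  have h : HasDerivAt (fun t : ℝ => sb*t) sb t := by
    simpa using (hasDerivAt_id t).const_mul sb
  simpa [mul_comm] using h.cos

lemma hsin (t : ℝ) : HasDerivAt (fun t => Real.sin (sb*t)) (sb*Real.cos (sb*t)) t := by
  have h : HasDerivAt (fun t : ℝ => sb*t) sb t := by
    simpa using (hasDerivAt_id t).const_mul sb
  simpa [mul_comm] using h.sin

lemma hexp (t : ℝ) : HasDerivAt (fun t => Real.exp (sa*t^2)) (2*sa*t*Real.exp (sa*t^2)) t := by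
  have h : HasDerivAt (fun t : ℝ => sa*t^2) (sa*(2*t)) t := by
    simpa using ((hasDerivAt_pow 2 t).const_mul sa)
  have := h.exp
  convert this using 1
  ring

lemma hf0 (t : ℝ) : HasDerivAt f0 (f1 t) t := by
  have := (hcos t).mul (hexp t)
  convert this using 1
  all_goals first | rfl | (unfold f1; ring)

lemma hf1 (t : ℝ) : HasDerivAt f1 (f2 t) t := by
  have hin : HasDerivAt (fun t => 2*sa*t*Real.cos (sb*t) - sb*Real.sin (sb*t))
      ((2*sa)*Real.cos (sb*t) + (2*sa*t)*(-(sb*Real.sin (sb*t))) - sb*(sb*Real.cos (sb*t))) t := by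
    have h1 : HasDerivAt (fun t : ℝ => 2*sa*t) (2*sa) t := by
      simpa using (hasDerivAt_id t).const_mul (2*sa)
    exact (h1.mul (hcos t)).sub ((hsin t).const_mul sb)
  have := hin.mul (hexp t)
  convert this using 1
  all_goals first | rfl | (unfold f2; ring)

lemma f0_pos (t : ℝ) (ht : |t| ≤ 2) : 0 < f0 t := by
  unfold f0
  exact mul_pos (cos_pos_of t ht) (Real.exp_pos _)

/-- The key one-dimensional strict inequality. -/
lemma H_neg (s : ℝ) (hs : |s| ≤ 2) :
    (4*sa^2*s^2 - sb^2 + 2*sa + 1/2 - s^2/16) * Real.cos (sb*s)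
      - 4*sa*sb*s*Real.sin (sb*s) < 0 := by
  have hc := cos_pos_of s hs
  have hss := sin_sign s hs
  have h1 : 4*sa^2*s^2 - sb^2 + 2*sa + 1/2 - s^2/16 < 0 := by
    rw [sb_sq, sa_val]; nlinarith [sq_nonneg s]
  have h2 := mul_neg_of_neg_of_pos h1 hc
  have h3 : 0 ≤ 4*sa*sb*(s*Real.sin (sb*s)) := by
    apply mul_nonneg _ hss
    rw [sa_val]
    linarith [sb_pos]
  nlinarith

/-! #### The supersolution on `ℝ²` and general fderiv machinery -/

lemma proj_hasFDerivAt (i : Fin 2) (x : E2) :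
    HasFDerivAt (fun y : E2 => y i) (EuclideanSpace.proj i : E2 →L[ℝ] ℝ) x := by
  have h := (EuclideanSpace.proj i : E2 →L[ℝ] ℝ).hasFDerivAt (x := x)
  exact h

lemma hasFDerivAt_prod (p q p' q' : ℝ → ℝ)
    (hp : ∀ t, HasDerivAt p (p' t) t) (hq : ∀ t, HasDerivAt q (q' t) t) (x : E2) :
    HasFDerivAt (fun y : E2 => p (y 0) * q (y 1))
      (p (x 0) • (q' (x 1) • (EuclideanSpace.proj (1 : Fin 2) : E2 →L[ℝ] ℝ)) +
       q (x 1) • (p' (x 0) • (EuclideanSpace.proj (0 : Fin 2) : E2 →L[ℝ] ℝ))) x := by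
  have h0 : HasFDerivAt (fun y : E2 => p (y 0))
      (p' (x 0) • (EuclideanSpace.proj (0 : Fin 2) : E2 →L[ℝ] ℝ)) x :=
    (hp (x 0)).comp_hasFDerivAt x (proj_hasFDerivAt 0 x)
  have h1 : HasFDerivAt (fun y : E2 => q (y 1))
      (q' (x 1) • (EuclideanSpace.proj (1 : Fin 2) : E2 →L[ℝ] ℝ)) x :=
    (hq (x 1)).comp_hasFDerivAt x (proj_hasFDerivAt 1 x)
  exact h0.mul h1

lemma std_apply (i j : Fin 2) : std i j = if j = i then 1 else 0 := by
  simp [std, EuclideanSpace.single_apply]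

lemma D1_prod0 (p q p' q' : ℝ → ℝ)
    (hp : ∀ t, HasDerivAt p (p' t) t) (hq : ∀ t, HasDerivAt q (q' t) t) (x : E2) :
    D1 (fun y : E2 => p (y 0) * q (y 1)) 0 x = p' (x 0) * q (x 1) := by
  rw [D1, (hasFDerivAt_prod p q p' q' hp hq x).fderiv]
  simp [std_apply, mul_comm]

lemma D1_prod1 (p q p' q' : ℝ → ℝ)
    (hp : ∀ t, HasDerivAt p (p' t) t) (hq : ∀ t, HasDerivAt q (q' t) t) (x : E2) :
    D1 (fun y : E2 => p (y 0) * q (y 1)) 1 x = p (x 0) * q' (x 1) := by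
  rw [D1, (hasFDerivAt_prod p q p' q' hp hq x).fderiv]
  simp [std_apply]

lemma diff_prod (p q p' q' : ℝ → ℝ)
    (hp : ∀ t, HasDerivAt p (p' t) t) (hq : ∀ t, HasDerivAt q (q' t) t) (x : E2) :
    DifferentiableAt ℝ (fun y : E2 => p (y 0) * q (y 1)) x :=
  (hasFDerivAt_prod p q p' q' hp hq x).differentiableAt

/-- The strict positive supersolution `w`. -/
def ww (x : E2) : ℝ := f0 (x 0) * f0 (x 1)

lemma ww_diff (x : E2) : DifferentiableAt ℝ ww x :=
  diff_prod f0 f0 f1 f1 hf0 hf0 x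

lemma ww_cont : Continuous ww :=
  continuous_iff_continuousAt.mpr fun x => (ww_diff x).continuousAt

lemma D1_ww_0 : D1 ww 0 = fun y : E2 => f1 (y 0) * f0 (y 1) :=
  funext fun y => D1_prod0 f0 f0 f1 f1 hf0 hf0 y

lemma D1_ww_1 : D1 ww 1 = fun y : E2 => f0 (y 0) * f1 (y 1) :=
  funext fun y => D1_prod1 f0 f0 f1 f1 hf0 hf0 y

lemma fin2_cases (i : Fin 2) : i = 0 ∨ i = 1 := by omega

lemma D1_ww_diff (i : Fin 2) (x : E2) : DifferentiableAt ℝ (D1 ww i) x := by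
  rcases fin2_cases i with h | h <;> subst h
  · rw [D1_ww_0]; exact diff_prod f1 f0 f2 f1 hf1 hf0 x
  · rw [D1_ww_1]; exact diff_prod f0 f1 f1 f2 hf0 hf1 x

lemma D2_ww_00 (x : E2) : D2 ww 0 0 x = f2 (x 0) * f0 (x 1) := by
  rw [D2, D1_ww_0]
  exact D1_prod0 f1 f0 f2 f1 hf1 hf0 x

lemma D2_ww_11 (x : E2) : D2 ww 1 1 x = f0 (x 0) * f2 (x 1) := by
  rw [D2, D1_ww_1]
  exact D1_prod1 f0 f1 f1 f2 hf0 hf1 x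

lemma lap_ww (x : E2) : lap ww x = f2 (x 0) * f0 (x 1) + f0 (x 0) * f2 (x 1) := by
  rw [lap, Fin.sum_univ_two, D2_ww_00, D2_ww_11]

lemma norm_sq_eq (x : E2) : ‖x‖^2 = (x 0)^2 + (x 1)^2 := by
  rw [EuclideanSpace.norm_eq, Real.sq_sqrt (by positivity)]
  simp [Fin.sum_univ_two, Real.norm_eq_abs, sq_abs]

lemma coord_le (x : E2) (hx : ‖x‖ ≤ 2) (i : Fin 2) : |x i| ≤ 2 := by
  have h1 := norm_sq_eq x
  have h2 : ‖x‖^2 ≤ 4 := by nlinarith [norm_nonneg x]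
  rcases fin2_cases i with h | h <;> subst h <;>
    nlinarith [sq_abs (x 0), sq_abs (x 1), abs_nonneg (x 0), abs_nonneg (x 1),
      sq_nonneg (x 0), sq_nonneg (x 1)]

lemma ww_pos (x : E2) (hx : ‖x‖ ≤ 2) : 0 < ww x :=
  mul_pos (f0_pos _ (coord_le x hx 0)) (f0_pos _ (coord_le x hx 1))

/-- `w` is a strict supersolution: `Δw + (1 - |x|²/16) w < 0` on the disk of radius 2. -/
lemma ww_supersol (x : E2) (hx : ‖x‖ ≤ 2) :
    lap ww x + (1 - ‖x‖^2/16) * ww x < 0 := by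
  have h0 := coord_le x hx 0
  have h1 := coord_le x hx 1
  set s := x 0
  set t := x 1
  have H0 := H_neg s h0
  have H1 := H_neg t h1
  have hc0 := cos_pos_of s h0
  have hc1 := cos_pos_of t h1
  rw [lap_ww, ww, norm_sq_eq]
  have key : f2 s * f0 t + f0 s * f2 t + (1 - ((s)^2 + (t)^2)/16) * (f0 s * f0 t)
      = Real.exp (sa*s^2) * Real.exp (sa*t^2) *
        (Real.cos (sb*t) * ((4*sa^2*s^2 - sb^2 + 2*sa + 1/2 - s^2/16) * Real.cos (sb*s)
            - 4*sa*sb*s*Real.sin (sb*s))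
         + Real.cos (sb*s) * ((4*sa^2*t^2 - sb^2 + 2*sa + 1/2 - t^2/16) * Real.cos (sb*t)
            - 4*sa*sb*t*Real.sin (sb*t))) := by
    unfold f0 f2; ring
  rw [key]
  apply mul_neg_of_pos_of_neg (by positivity)
  nlinarith [mul_neg_of_pos_of_neg hc1 H0, mul_neg_of_pos_of_neg hc0 H1]

/-! #### Second derivative test -/

lemma second_deriv_test {g g' : ℝ → ℝ} {d : ℝ}
    (hmax : IsLocalMax g 0)
    (hg : ∀ᶠ t in 𝓝 (0:ℝ), HasDerivAt g (g' t) t)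
    (hg' : HasDerivAt g' d 0) : d ≤ 0 := by
  by_contra hdd
  push_neg at hdd
  have hg0 : HasDerivAt g (g' 0) 0 := hg.self_of_nhds
  have hg'0 : g' 0 = 0 := by rw [← hg0.deriv]; exact hmax.deriv_eq_zero
  have hslope : Tendsto (slope g' 0) (𝓝[≠] (0:ℝ)) (𝓝 d) :=
    hasDerivAt_iff_tendsto_slope.mp hg'
  have hpos : ∀ᶠ t in 𝓝[≠] (0:ℝ), 0 < slope g' 0 t :=
    hslope.eventually (eventually_gt_nhds hdd)
  have hpos' : ∀ᶠ t in 𝓝[>] (0:ℝ), 0 < g' t := by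
    have h2 : ∀ᶠ t in 𝓝[>] (0:ℝ), 0 < slope g' 0 t :=
      nhdsWithin_mono _ (fun t (ht : t ∈ Ioi 0) => ne_of_gt ht) hpos
    filter_upwards [h2, self_mem_nhdsWithin] with t ht ht0
    have hts : slope g' 0 t = g' t / t := by
      simp [slope, hg'0, div_eq_inv_mul]
    rw [hts] at ht
    have ht0' : (0:ℝ) < t := ht0
    rcases div_pos_iff.mp ht with ⟨h,_⟩|⟨_,h⟩
    · exact h
    · linarith
  rw [eventually_nhdsWithin_iff] at hpos'
  obtain ⟨e1, he1, hV⟩ := Metric.eventually_nhds_iff.mp hg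
  obtain ⟨e2, he2, hM⟩ := Metric.eventually_nhds_iff.mp hmax
  obtain ⟨e3, he3, hP⟩ := Metric.eventually_nhds_iff.mp hpos'
  set m := min (min e1 e2) e3 with hm
  have hm0 : 0 < m := lt_min (lt_min he1 he2) he3
  have hme1 : m ≤ e1 := le_trans (min_le_left _ _) (min_le_left _ _)
  have hme2 : m ≤ e2 := le_trans (min_le_left _ _) (min_le_right _ _)
  have hme3 : m ≤ e3 := min_le_right _ _
  set ε := m / 2 with hε'
  have hε : 0 < ε := by positivity
  have hdist : ∀ t, t ∈ Icc 0 ε → dist t 0 < m := by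
    intro t ht
    rw [Real.dist_eq, sub_zero, abs_of_nonneg ht.1]
    calc t ≤ ε := ht.2
    _ < m := by rw [hε']; linarith
  have hmono : StrictMonoOn g (Icc 0 ε) := by
    apply strictMonoOn_of_deriv_pos (convex_Icc 0 ε)
    · intro t ht
      exact (hV (lt_of_lt_of_le (hdist t ht) hme1)).continuousAt.continuousWithinAt
    · intro t ht
      rw [interior_Icc] at ht
      have ht' : t ∈ Icc 0 ε := ⟨ht.1.le, ht.2.le⟩
      rw [(hV (lt_of_lt_of_le (hdist t ht') hme1)).deriv]
      exact hP (lt_of_lt_of_le (hdist t ht') hme3) ht.1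
  have h1 : g 0 < g ε := hmono (left_mem_Icc.mpr hε.le) (right_mem_Icc.mpr hε.le) hε
  have h2 : g ε ≤ g 0 :=
    hM (lt_of_lt_of_le (hdist ε (right_mem_Icc.mpr hε.le)) hme2)
  linarith

/-- Second derivative test in direction `i` at an interior local maximum. -/
lemma D2_nonpos {h : E2 → ℝ} {x₀ : E2} (i : Fin 2)
    (hmax : IsLocalMax h x₀)
    (hdiff : ∀ᶠ y in 𝓝 x₀, DifferentiableAt ℝ h y)
    (hdiff2 : DifferentiableAt ℝ (D1 h i) x₀) :
    D2 h i i x₀ ≤ 0 := by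
  set γ : ℝ → E2 := fun t => x₀ + t • std i with hγdef
  have hγ : ∀ t : ℝ, HasDerivAt γ (std i) t := by
    intro t
    have h1 : HasDerivAt (fun t : ℝ => t • std i) ((1:ℝ) • std i) t :=
      (hasDerivAt_id t).smul_const (std i)
    rw [one_smul] at h1
    exact h1.const_add x₀
  have hγ0 : γ 0 = x₀ := by simp [hγdef]
  have hγt : Tendsto γ (𝓝 0) (𝓝 x₀) := by
    rw [← hγ0]; exact (hγ 0).continuousAt.tendsto
  have hmax' : ∀ᶠ y in 𝓝 x₀, h y ≤ h x₀ := hmax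
  have hgmax : IsLocalMax (h ∘ γ) 0 := by
    have h2 := hγt.eventually hmax'
    filter_upwards [h2] with t ht
    simpa [Function.comp, hγ0] using ht
  have hgd : ∀ᶠ t in 𝓝 (0:ℝ), HasDerivAt (h ∘ γ) (D1 h i (γ t)) t := by
    filter_upwards [hγt.eventually hdiff] with t ht
    exact ht.hasFDerivAt.comp_hasDerivAt t (hγ t)
  have hgd2 : HasDerivAt (fun t => D1 h i (γ t)) (D2 h i i x₀) 0 := by
    have hd2' : HasFDerivAt (D1 h i) (fderiv ℝ (D1 h i) x₀) (γ 0) := by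
      rw [hγ0]; exact hdiff2.hasFDerivAt
    exact hd2'.comp_hasDerivAt 0 (hγ 0)
  exact second_deriv_test hgmax hgd hgd2

/-! #### Linearity of the Laplacian -/

lemma D1_neg (u : E2 → ℝ) (i : Fin 2) : D1 (fun y => -u y) i = fun x => -(D1 u i x) := by
  funext x
  rw [D1, fderiv_fun_neg]
  simp [D1]

lemma lap_neg (u : E2 → ℝ) (x : E2) : lap (fun y => -u y) x = - lap u x := by
  rw [lap, lap, ← Finset.sum_neg_distrib]
  apply Finset.sum_congr rfl
  intro i _
  rw [D2, D2, D1_neg, fderiv_fun_neg]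
  simp

/-! #### The key maximum-principle lemma -/

lemma key (R : ℝ) (hR0 : 0 < R) (hR2 : R ≤ 2) (u : E2 → ℝ)
    (hcont : ContinuousOn u (closedBall (0 : E2) R))
    (hreg : ContDiffOn ℝ 2 u (ball (0 : E2) R))
    (heq : ∀ x ∈ ball (0 : E2) R, lap u x - (‖x‖^2 / 16) * u x + u x = 0)
    (hbd : ∀ x : E2, ‖x‖ = R → u x = 0) :
    ∀ x ∈ closedBall (0 : E2) R, u x ≤ 0 := by
  have hnorm2 : ∀ y ∈ closedBall (0 : E2) R, ‖y‖ ≤ 2 := by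
    intro y hy
    rw [mem_closedBall_zero_iff] at hy
    linarith
  have hwpos : ∀ y ∈ closedBall (0 : E2) R, 0 < ww y := fun y hy => ww_pos y (hnorm2 y hy)
  -- extreme value theorem for u/w
  have hφcont : ContinuousOn (fun y => u y / ww y) (closedBall (0 : E2) R) :=
    hcont.div ww_cont.continuousOn (fun y hy => ne_of_gt (hwpos y hy))
  obtain ⟨x₀, hx₀, hmax⟩ := (isCompact_closedBall (0:E2) R).exists_isMaxOn
    ⟨0, mem_closedBall_self hR0.le⟩ hφcont
  have hmax' : ∀ y ∈ closedBall (0 : E2) R, u y / ww y ≤ u x₀ / ww x₀ :=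
    fun y hy => hmax hy
  set M := u x₀ / ww x₀ with hMdef
  rcases le_or_gt M 0 with hM | hM
  · -- trivial case: max of u/w is ≤ 0
    intro x hx
    have h1 : u x / ww x ≤ 0 := le_trans (hmax' x hx) hM
    have h2 := hwpos x hx
    nlinarith [(div_le_iff₀ h2).mp (le_trans h1 (le_refl 0))]
  · -- the max is positive; derive a contradiction
    exfalso
    have hwx₀ := hwpos x₀ hx₀
    -- x₀ is interior
    have hx₀ball : x₀ ∈ ball (0 : E2) R := by
      rw [mem_ball_zero_iff]
      rcases lt_or_eq_of_le (mem_closedBall_zero_iff.mp hx₀) with h | h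
      · exact h
      · exfalso
        have := hbd x₀ h
        rw [hMdef, this] at hM
        simp at hM
    have hux₀ : u x₀ = M * ww x₀ := by
      rw [hMdef, div_mul_cancel₀]
      exact ne_of_gt hwx₀
    -- h := u - M w has an interior max at x₀ with value 0
    set h : E2 → ℝ := fun y => u y - M * ww y with hhdef
    have hh0 : h x₀ = 0 := by rw [hhdef]; simp [hux₀]
    have hhle : ∀ y ∈ closedBall (0 : E2) R, h y ≤ 0 := by
      intro y hy
      have h1 := hmax' y hy
      have h2 := hwpos y hy
      have h3 := (div_le_iff₀ h2).mp h1
      rw [hhdef]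
      simp only
      nlinarith
    have hballmem : ball (0 : E2) R ∈ 𝓝 x₀ := isOpen_ball.mem_nhds hx₀ball
    have hlocmax : IsLocalMax h x₀ := by
      filter_upwards [hballmem] with y hy
      rw [hh0]
      exact hhle y (ball_subset_closedBall hy)
    -- differentiability of u near x₀
    have hudiff : ∀ y ∈ ball (0 : E2) R, DifferentiableAt ℝ u y := by
      intro y hy
      exact (hreg.differentiableOn (by norm_num)).differentiableAt (isOpen_ball.mem_nhds hy)
    have hhdiff : ∀ᶠ y in 𝓝 x₀, DifferentiableAt ℝ h y := by
      filter_upwards [hballmem] with y hy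
      exact (hudiff y hy).sub ((ww_diff y).const_mul M)
    -- D1 h agrees with D1 u - M • D1 w near x₀
    have hD1h : ∀ i : Fin 2, (D1 h i) =ᶠ[𝓝 x₀] (fun y => D1 u i y - M * D1 ww i y) := by
      intro i
      filter_upwards [hballmem] with y hy
      rw [D1, hhdef]
      rw [fderiv_fun_sub (hudiff y hy) ((ww_diff y).const_mul M)]
      rw [fderiv_const_mul (ww_diff y) M]
      simp [D1]
    -- differentiability of D1 u i at x₀
    have hcda : ContDiffAt ℝ 2 u x₀ := hreg.contDiffAt hballmem
    have hfd : ContDiffAt ℝ 1 (fderiv ℝ u) x₀ := hcda.fderiv_right (by norm_num)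
    have hD1udiff : ∀ i : Fin 2, DifferentiableAt ℝ (D1 u i) x₀ := by
      intro i
      have h3 := ((ContinuousLinearMap.apply ℝ ℝ (std i)).contDiff.contDiffAt).comp x₀ hfd
      exact h3.differentiableAt one_ne_zero
    have hD1hdiff : ∀ i : Fin 2, DifferentiableAt ℝ (D1 h i) x₀ := by
      intro i
      rw [(hD1h i).differentiableAt_iff]
      exact (hD1udiff i).sub ((D1_ww_diff i x₀).const_mul M)
    -- splitting of second derivatives
    have hD2h : ∀ i : Fin 2, D2 h i i x₀ = D2 u i i x₀ - M * D2 ww i i x₀ := by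
      intro i
      rw [D2, (hD1h i).fderiv_eq]
      rw [fderiv_fun_sub (hD1udiff i) ((D1_ww_diff i x₀).const_mul M)]
      rw [fderiv_const_mul (D1_ww_diff i x₀) M]
      simp [D2]
    -- second derivative test
    have hD2le : ∀ i : Fin 2, D2 h i i x₀ ≤ 0 :=
      fun i => D2_nonpos i hlocmax hhdiff (hD1hdiff i)
    have hlaphle : lap h x₀ ≤ 0 := by
      rw [lap, Fin.sum_univ_two]
      linarith [hD2le 0, hD2le 1]
    have hlaph : lap h x₀ = lap u x₀ - M * lap ww x₀ := by
      rw [lap, lap, lap, Fin.sum_univ_two, Fin.sum_univ_two, Fin.sum_univ_two,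
        hD2h 0, hD2h 1]
      ring
    -- the equation and the supersolution property
    have heq₀ := heq x₀ hx₀ball
    have hsup := ww_supersol x₀ (hnorm2 x₀ hx₀)
    nlinarith [mul_pos hM (by linarith : (0:ℝ) < -(lap ww x₀ + (1 - ‖x₀‖^2/16) * ww x₀))]

end Stmt16Aux

open Stmt16Aux in
/-- The stability operator `Δ − |x|²/16 + 1` of a flat plane through the origin
(as a minimal surface in the Gaussian metric `e^{−|x|²/4}δ`, up to the conformal factor) has
trivial Dirichlet kernel on the disks of radius `√2` and `2`. -/
theorem stmt16 (R : ℝ) (hR : R = Real.sqrt 2 ∨ R = 2) (u : E2 → ℝ)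
    (hcont : ContinuousOn u (closedBall (0 : E2) R))
    (hreg : ContDiffOn ℝ 2 u (ball (0 : E2) R))
    (heq : ∀ x ∈ ball (0 : E2) R, lap u x - (‖x‖^2 / 16) * u x + u x = 0)
    (hbd : ∀ x : E2, ‖x‖ = R → u x = 0) :
    ∀ x ∈ closedBall (0 : E2) R, u x = 0 := by
  have hR0 : 0 < R := by
    rcases hR with h | h <;> rw [h]
    · exact Real.sqrt_pos.mpr (by norm_num)
    · norm_num
  have hR2 : R ≤ 2 := by
    rcases hR with h | h
    case inr => rw [h]
    rw [h]
    nlinarith [Real.sq_sqrt (by norm_num : (0:ℝ) ≤ 2), Real.sqrt_nonneg 2]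
  intro x hx
  have h1 : u x ≤ 0 := key R hR0 hR2 u hcont hreg heq hbd x hx
  have h2 : -u x ≤ 0 := by
    apply key R hR0 hR2 (fun y => -u y) hcont.neg hreg.neg _ _ x hx
    · intro y hy
      have h3 := heq y hy
      rw [lap_neg]
      linarith
    · intro y hy
      simp [hbd y hy]
  linarith

end
end

section
/- Let w : (0, π/2] → ℝ be a C² function satisfying the Legendre-type equation w''(φ) + (cos φ / sin φ)·w'(φ) + 4·w(φ) = 0 for all φ ∈ (0, π/2), with boundary behavior w(φ) → 1 and w'(φ) → 0 as φ → 0⁺. Then w(π/2) < 0 and w'(π/2) < 0. (Equivalently, the Legendre function P_l(cos φ) with l = (√17 − 1)/2, the positive root of l(l+1) = 4, is negative and strictly decreasing at φ = π/2.) -/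
open Real Set Filter

noncomputable section

def SP0 (t : ℝ) : ℝ := 1 - 4*t + 2*t^2 + (4/9)*t^3 + (2/9)*t^4 + (32/225)*t^5 + (208/2025)*t^6
def SP1 (t : ℝ) : ℝ := -4 + 4*t + (4/3)*t^2 + (8/9)*t^3 + (32/45)*t^4 + (416/675)*t^5
def SP2 (t : ℝ) : ℝ := 4 + (8/3)*t + (8/3)*t^2 + (128/45)*t^3 + (416/135)*t^4
def stf (φ : ℝ) : ℝ := (1 - Real.cos φ)/2
def sg (φ : ℝ) : ℝ := SP0 (stf φ)
def sg1 (φ : ℝ) : ℝ := SP1 (stf φ) * (Real.sin φ / 2)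
def sg2 (φ : ℝ) : ℝ := SP2 (stf φ) * (Real.sin φ / 2)^2 + SP1 (stf φ) * (Real.cos φ / 2)

lemma hSP0 (t : ℝ) : HasDerivAt SP0 (SP1 t) t := by
  unfold SP0 SP1
  have h : HasDerivAt (fun x : ℝ => 1 - 4*x + 2*x^2 + (4/9)*x^3 + (2/9)*x^4 + (32/225)*x^5 + (208/2025)*x^6)
      (0 - 4*1 + 2*(2*t^1) + (4/9)*(3*t^2) + (2/9)*(4*t^3) + (32/225)*(5*t^4) + (208/2025)*(6*t^5)) t := by
    exact ((((((hasDerivAt_const t (1:ℝ)).sub ((hasDerivAt_id t).const_mul 4)).add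
      ((hasDerivAt_pow 2 t).const_mul 2)).add ((hasDerivAt_pow 3 t).const_mul (4/9))).add
      ((hasDerivAt_pow 4 t).const_mul (2/9))).add ((hasDerivAt_pow 5 t).const_mul (32/225))).add
      ((hasDerivAt_pow 6 t).const_mul (208/2025))
  convert h using 1
  ring

lemma hSP1 (t : ℝ) : HasDerivAt SP1 (SP2 t) t := by
  unfold SP1 SP2
  have h : HasDerivAt (fun x : ℝ => -4 + 4*x + (4/3)*x^2 + (8/9)*x^3 + (32/45)*x^4 + (416/675)*x^5)
      (0 + 4*1 + (4/3)*(2*t^1) + (8/9)*(3*t^2) + (32/45)*(4*t^3) + (416/675)*(5*t^4)) t := by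
    exact (((((hasDerivAt_const t (-4:ℝ)).add ((hasDerivAt_id t).const_mul 4)).add
      ((hasDerivAt_pow 2 t).const_mul (4/3))).add ((hasDerivAt_pow 3 t).const_mul (8/9))).add
      ((hasDerivAt_pow 4 t).const_mul (32/45))).add ((hasDerivAt_pow 5 t).const_mul (416/675))
  convert h using 1
  ring

lemma hstf (φ : ℝ) : HasDerivAt stf (Real.sin φ / 2) φ := by
  unfold stf
  simpa using ((Real.hasDerivAt_cos φ).const_sub 1).div_const 2

lemma hsg (φ : ℝ) : HasDerivAt sg (sg1 φ) φ := by
  have h := (hSP0 (stf φ)).comp φ (hstf φ)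
  exact h

lemma hsg1 (φ : ℝ) : HasDerivAt sg1 (sg2 φ) φ := by
  have h := ((hSP1 (stf φ)).comp φ (hstf φ)).mul ((Real.hasDerivAt_sin φ).div_const 2)
  have h2 : HasDerivAt sg1 (SP2 (stf φ) * (Real.sin φ / 2) * (Real.sin φ / 2)
      + SP1 (stf φ) * (Real.cos φ / 2)) φ := by
    exact h
  convert h2 using 1
  simp [sg2]
  ring

lemma hres {φ : ℝ} (hs : Real.sin φ ≠ 0) :
    sg2 φ + (Real.cos φ / Real.sin φ) * sg1 φ + 4 * sg φ = -(7904/2025) * (stf φ)^6 := by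
  have h1 : (Real.cos φ / Real.sin φ) * sg1 φ = SP1 (stf φ) * (Real.cos φ / 2) := by
    unfold sg1; field_simp
  rw [h1]
  have hs2 : (Real.sin φ / 2)^2 = stf φ * (1 - stf φ) := by
    have h := Real.sin_sq_add_cos_sq φ
    unfold stf; nlinarith [h]
  have hcos : Real.cos φ / 2 = (1 - 2 * stf φ)/2 := by unfold stf; ring
  unfold sg2 sg
  rw [hs2, hcos]
  unfold SP0 SP1 SP2
  ring

lemma hcsg : Continuous sg := continuous_iff_continuousAt.mpr fun φ => (hsg φ).continuousAt
lemma hcsg1 : Continuous sg1 := continuous_iff_continuousAt.mpr fun φ => (hsg1 φ).continuousAt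

set_option maxHeartbeats 1000000 in
/-- Let `w` be a `C²` solution on `(0, π/2]` (with first and second
derivatives `w₁`, `w₂`) of the Legendre-type equation `w'' + (cos φ/sin φ)w' + 4w = 0`,
with `w(φ) → 1` and `w'(φ) → 0` as `φ → 0⁺`. Then `w(π/2) < 0` and `w'(π/2) < 0`. -/
theorem stmt17 (w w₁ w₂ : ℝ → ℝ)
    (hd1 : ∀ φ ∈ Set.Ioc (0 : ℝ) (π / 2), HasDerivWithinAt w (w₁ φ) (Set.Ioc 0 (π / 2)) φ)
    (hd2 : ∀ φ ∈ Set.Ioc (0 : ℝ) (π / 2), HasDerivWithinAt w₁ (w₂ φ) (Set.Ioc 0 (π / 2)) φ)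
    (hcont : ContinuousOn w₂ (Set.Ioc 0 (π / 2)))
    (hode : ∀ φ ∈ Set.Ioo (0 : ℝ) (π / 2), w₂ φ + (cos φ / sin φ) * w₁ φ + 4 * w φ = 0)
    (hw0 : Tendsto w (nhdsWithin 0 (Set.Ioi 0)) (nhds 1))
    (hw1 : Tendsto w₁ (nhdsWithin 0 (Set.Ioi 0)) (nhds 0)) :
    w (π / 2) < 0 ∧ w₁ (π / 2) < 0 := by
  have hπ2 : (0:ℝ) < π/2 := by positivity
  have hcw : ContinuousOn w (Set.Ioc 0 (π/2)) := fun φ hφ => (hd1 φ hφ).continuousWithinAt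
  have hcw1 : ContinuousOn w₁ (Set.Ioc 0 (π/2)) := fun φ hφ => (hd2 φ hφ).continuousWithinAt
  set Mc : ℝ := 247/4050 with hMc
  set F : ℝ → ℝ := fun φ => (w₁ φ - sg1 φ)^2 + 4*(w φ - sg φ)^2 with hFdef
  have key : ∀ ε : ℝ, 0 < ε → Real.sqrt (F (π/2) + ε^2) ≤ ε + Mc * (π/2) := by
    intro ε hε
    set Gf : ℝ → ℝ := fun φ => Real.sqrt (F φ + ε^2) with hGfdef
    set H : ℝ → ℝ := fun φ => Gf φ - Mc * φ with hHdef
    have hFpos : ∀ φ, 0 < F φ + ε^2 := fun φ => by positivity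
    have hFcont : ContinuousOn F (Set.Ioc 0 (π/2)) :=
      ((hcw1.sub hcsg1.continuousOn).pow 2).add
        (continuousOn_const.mul ((hcw.sub hcsg.continuousOn).pow 2))
    have hHcont : ContinuousOn H (Set.Ioc 0 (π/2)) :=
      ((hFcont.add continuousOn_const).sqrt).sub (continuous_const.mul continuous_id).continuousOn
    have hder : ∀ φ ∈ Set.Ioo (0:ℝ) (π/2), ∃ m, HasDerivAt H m φ ∧ m ≤ 0 := by
      intro φ hφ
      have hmem : φ ∈ Set.Ioc (0:ℝ) (π/2) := ⟨hφ.1, le_of_lt hφ.2⟩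
      have hnhds : Set.Ioc (0:ℝ) (π/2) ∈ nhds φ :=
        Filter.mem_of_superset (isOpen_Ioo.mem_nhds hφ) Set.Ioo_subset_Ioc_self
      have hw' : HasDerivAt w (w₁ φ) φ := (hd1 φ hmem).hasDerivAt hnhds
      have hw1' : HasDerivAt w₁ (w₂ φ) φ := (hd2 φ hmem).hasDerivAt hnhds
      have hdd : HasDerivAt (fun x => w x - sg x) (w₁ φ - sg1 φ) φ := hw'.sub (hsg φ)
      have hdd1 : HasDerivAt (fun x => w₁ x - sg1 x) (w₂ φ - sg2 φ) φ := hw1'.sub (hsg1 φ)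
      have hFd : HasDerivAt F
          (2*(w₁ φ - sg1 φ)*(w₂ φ - sg2 φ) + 8*(w φ - sg φ)*(w₁ φ - sg1 φ)) φ := by
        have h1 := hdd1.pow 2
        have h2 := (hdd.pow 2).const_mul (4:ℝ)
        exact (h1.add h2).congr_deriv (by push_cast; ring)
      have hGd : HasDerivAt Gf
          ((2*(w₁ φ - sg1 φ)*(w₂ φ - sg2 φ) + 8*(w φ - sg φ)*(w₁ φ - sg1 φ))
            / (2 * Real.sqrt (F φ + ε^2))) φ := by
        have := (hFd.add_const (ε^2)).sqrt (ne_of_gt (hFpos φ))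
        simpa [hGfdef] using this
      have hHd : HasDerivAt H
          ((2*(w₁ φ - sg1 φ)*(w₂ φ - sg2 φ) + 8*(w φ - sg φ)*(w₁ φ - sg1 φ))
            / (2 * Real.sqrt (F φ + ε^2)) - Mc) φ := by
        have := hGd.sub ((hasDerivAt_id φ).const_mul Mc)
        convert this using 1 <;> first | rfl | simp
      refine ⟨_, hHd, ?_⟩
      -- now the sign bound
      have hsin : 0 < Real.sin φ := Real.sin_pos_of_pos_of_lt_pi hφ.1 (by linarith [pi_pos.le, hφ.2])
      have hcos : 0 < Real.cos φ := Real.cos_pos_of_mem_Ioo ⟨by linarith [pi_pos, hφ.1], hφ.2⟩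
      have hodeφ := hode φ hφ
      have hresφ := hres (ne_of_gt hsin)
      have hw2eq : w₂ φ - sg2 φ = -(Real.cos φ / Real.sin φ)*(w₁ φ - sg1 φ)
          - 4*(w φ - sg φ) + (7904/2025) * (stf φ)^6 := by linear_combination hodeφ - hresφ
      have ht0 : 0 ≤ stf φ := by
        have := Real.cos_le_one φ; unfold stf; linarith
      have ht1 : stf φ ≤ 1/2 := by unfold stf; linarith [hcos]
      have hrM : (7904/2025) * (stf φ)^6 ≤ Mc := by
        have h6 : (stf φ)^6 ≤ (1/2)^6 := pow_le_pow_left₀ ht0 ht1 6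
        rw [hMc]; nlinarith [h6]
      have hr0 : 0 ≤ (7904/2025) * (stf φ)^6 := by positivity
      set s0 := Real.sqrt (F φ + ε^2) with hs0def
      have hs0pos : 0 < s0 := Real.sqrt_pos.mpr (hFpos φ)
      have habs : |w₁ φ - sg1 φ| ≤ s0 := by
        have h1 : (w₁ φ - sg1 φ)^2 ≤ F φ + ε^2 := by
          have hFv : F φ = (w₁ φ - sg1 φ)^2 + 4*(w φ - sg φ)^2 := rfl
          rw [hFv]; nlinarith [sq_nonneg (w φ - sg φ), sq_nonneg ε]
        have := Real.sqrt_le_sqrt h1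
        rwa [Real.sqrt_sq_eq_abs] at this
      have hub : w₁ φ - sg1 φ ≤ s0 := le_trans (le_abs_self _) habs
      have hlb : -s0 ≤ w₁ φ - sg1 φ := by
        have := neg_abs_le (w₁ φ - sg1 φ); linarith
      have hcotpos : 0 ≤ Real.cos φ / Real.sin φ := le_of_lt (div_pos hcos hsin)
      have hnum : 2*(w₁ φ - sg1 φ)*(w₂ φ - sg2 φ) + 8*(w φ - sg φ)*(w₁ φ - sg1 φ)
          ≤ Mc * (2 * s0) := by
        rw [hw2eq]
        have hsq : 0 ≤ (w₁ φ - sg1 φ)^2 := sq_nonneg _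
        nlinarith [mul_nonneg hcotpos hsq, mul_le_mul_of_nonneg_right hub hr0,
          mul_le_mul_of_nonneg_left hrM hs0pos.le,
          mul_le_mul_of_nonneg_right (neg_le_iff_add_nonneg.mp hlb) hr0]
      have h2s0 : 0 < 2 * s0 := by linarith
      have := (div_le_iff₀ h2s0).mpr hnum
      linarith [this]
    have hmono : ∀ a ∈ Set.Ioo (0:ℝ) (π/2), H (π/2) ≤ H a := by
      intro a ha
      have hsub : Set.Icc a (π/2) ⊆ Set.Ioc 0 (π/2) := fun x hx => ⟨lt_of_lt_of_le ha.1 hx.1, hx.2⟩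
      have hanti : AntitoneOn H (Set.Icc a (π/2)) := by
        apply antitoneOn_of_deriv_nonpos (convex_Icc a (π/2)) (hHcont.mono hsub)
        · intro x hx
          rw [interior_Icc] at hx
          obtain ⟨m, hm, _⟩ := hder x ⟨lt_trans ha.1 hx.1, hx.2⟩
          exact hm.differentiableAt.differentiableWithinAt
        · intro x hx
          rw [interior_Icc] at hx
          obtain ⟨m, hm, hm0⟩ := hder x ⟨lt_trans ha.1 hx.1, hx.2⟩
          rw [hm.deriv]; exact hm0
      exact hanti ⟨le_refl a, le_of_lt ha.2⟩ ⟨le_of_lt ha.2, le_refl _⟩ (le_of_lt ha.2)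
    have hg0 : Tendsto sg (nhdsWithin 0 (Set.Ioi 0)) (nhds 1) := by
      have h := hcsg.tendsto 0
      have h0 : sg 0 = 1 := by simp [sg, stf, SP0]
      rw [h0] at h
      exact h.mono_left nhdsWithin_le_nhds
    have hg10 : Tendsto sg1 (nhdsWithin 0 (Set.Ioi 0)) (nhds 0) := by
      have h := hcsg1.tendsto 0
      have h0 : sg1 0 = 0 := by simp [sg1]
      rw [h0] at h
      exact h.mono_left nhdsWithin_le_nhds
    have hFlim : Tendsto F (nhdsWithin 0 (Set.Ioi 0)) (nhds 0) := by
      have h1 : Tendsto (fun a => (w₁ a - sg1 a)^2) (nhdsWithin 0 (Set.Ioi 0)) (nhds ((0-0)^2)) :=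
        (hw1.sub hg10).pow 2
      have h2 : Tendsto (fun a => 4*(w a - sg a)^2) (nhdsWithin 0 (Set.Ioi 0))
          (nhds (4*((1-1)^2))) := ((hw0.sub hg0).pow 2).const_mul 4
      have := h1.add h2
      norm_num at this
      exact this
    have hHlim : Tendsto H (nhdsWithin 0 (Set.Ioi 0)) (nhds ε) := by
      have hGl : Tendsto Gf (nhdsWithin 0 (Set.Ioi 0)) (nhds (Real.sqrt (0 + ε^2))) :=
        (Real.continuous_sqrt.tendsto _).comp (hFlim.add_const (ε^2))
      rw [show Real.sqrt (0 + ε^2) = ε by rw [zero_add, Real.sqrt_sq hε.le]] at hGl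
      have hlin : Tendsto (fun a : ℝ => Mc * a) (nhdsWithin 0 (Set.Ioi 0)) (nhds (Mc * 0)) :=
        ((continuous_const.mul continuous_id).tendsto 0).mono_left nhdsWithin_le_nhds
      have := hGl.sub hlin
      norm_num at this
      exact this
    have hev : ∀ᶠ a in nhdsWithin (0:ℝ) (Set.Ioi 0), H (π/2) ≤ H a := by
      filter_upwards [Ioo_mem_nhdsGT hπ2] with a ha
      exact hmono a ha
    have hfin : H (π/2) ≤ ε := ge_of_tendsto hHlim hev
    have : Gf (π/2) - Mc * (π/2) ≤ ε := hfin
    rw [hGfdef] at this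
    linarith
  -- conclude F (π/2) ≤ (Mc * (π/2))^2
  have hKpos : 0 < Mc * (π/2) := by rw [hMc]; positivity
  have hF2 : F (π/2) ≤ (Mc * (π/2))^2 := by
    refine le_of_forall_pos_le_add ?_
    intro δ hδ
    set εv : ℝ := δ / (2 * (Mc * (π/2)) + 1) with hεv
    have hεvpos : 0 < εv := by positivity
    have hkey := key εv hεvpos
    have hFe : F (π/2) + εv^2 ≤ (εv + Mc * (π/2))^2 := by
      have h1 : F (π/2) + εv^2 = (Real.sqrt (F (π/2) + εv^2))^2 :=
        (Real.sq_sqrt (by positivity)).symm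
      rw [h1]
      exact pow_le_pow_left₀ (Real.sqrt_nonneg _) hkey 2
    have hεsmall : 2 * εv * (Mc * (π/2)) ≤ δ := by
      have heq : εv * (2 * (Mc * (π/2)) + 1) = δ := by
        rw [hεv]; field_simp
      nlinarith [heq, hεvpos]
    nlinarith [hFe, hεsmall]
  have hgval : sg (π/2) = -6877/16200 := by
    simp [sg, stf, SP0, Real.cos_pi_div_two]
    norm_num
  have hg1val : sg1 (π/2) = -1007/1350 := by
    simp [sg1, stf, SP1, Real.cos_pi_div_two, Real.sin_pi_div_two]
    norm_num
  have hFv2 : F (π/2) = (w₁ (π/2) - sg1 (π/2))^2 + 4*(w (π/2) - sg (π/2))^2 := rfl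
  rw [hFv2] at hF2
  have hd1sq : (w₁ (π/2) - sg1 (π/2))^2 ≤ (Mc * (π/2))^2 := by
    nlinarith [sq_nonneg (w (π/2) - sg (π/2)), hF2]
  have hdsq : 4*(w (π/2) - sg (π/2))^2 ≤ (Mc * (π/2))^2 := by
    nlinarith [sq_nonneg (w₁ (π/2) - sg1 (π/2)), hF2]
  rw [hgval] at hdsq
  rw [hg1val] at hd1sq
  have hπlt : π < 3.15 := pi_lt_d2
  have hπgt : 3 < π := pi_gt_three
  constructor
  · nlinarith [hdsq, hπlt, hπgt, sq_nonneg (w (π/2) + 6877/16200)]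
  · nlinarith [hd1sq, hπlt, hπgt, sq_nonneg (w₁ (π/2) + 1007/1350)]

end
end
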